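/- Let 0 < c_1 < c_n < 1, η ∈ (0,1], N > 0, and n ≥ 1 an integer. Define I_e(η) = nN/(η(1−c_n η)) + c_n²/(2(1−c_n η)²) and I_s(η) = n(N/(η(1−c_1 η)) + c_1²/(2(1−c_1 η)²)). If N > c_1²/(2(c_n − c_1)), then I_e(η) > I_s(η). -/

import Mathlib

theorem stmt_3 (c1 cn η N : ℝ) (n : ℕ) (hn : 1 ≤ n)
    (hc1 : 0 < c1) (hc1n : c1 < cn) (hcn : cn < 1)
    (hη0 : 0 < η) (hη1 : η ≤ 1) (hN : 0 < N)
    (hNbig : N > c1 ^ 2 / (2 * (cn - c1))) :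
    (n : ℝ) * N / (η * (1 - cn * η)) + cn ^ 2 / (2 * (1 - cn * η) ^ 2) >
      (n : ℝ) * (N / (η * (1 - c1 * η)) + c1 ^ 2 / (2 * (1 - c1 * η) ^ 2)) := by
  have hA : 0 < 1 - cn * η := by nlinarith
  have hB : 0 < 1 - c1 * η := by nlinarith
  have hAB : 1 - cn * η < 1 - c1 * η := by nlinarith
  have hn' : (1 : ℝ) ≤ (n : ℝ) := by exact_mod_cast hn
  have hkey : c1 ^ 2 < 2 * (cn - c1) * N := by
    rw [gt_iff_lt, div_lt_iff₀ (by nlinarith)] at hNbig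
    nlinarith
  have e1 : (n : ℝ) * N / (η * (1 - cn * η)) =
      (n : ℝ) * N / (η * (1 - c1 * η)) +
        (n : ℝ) * N * (cn - c1) / ((1 - cn * η) * (1 - c1 * η)) := by
    rw [div_add_div _ _ (by positivity) (by positivity), div_eq_div_iff (by positivity) (by positivity)]
    ring
  have e2 : (n : ℝ) * c1 ^ 2 / (2 * (1 - c1 * η) ^ 2) <
      (n : ℝ) * N * (cn - c1) / ((1 - cn * η) * (1 - c1 * η)) := by
    rw [div_lt_div_iff₀ (by positivity) (by positivity)]
    have hn0 : 0 < (n : ℝ) := by linarith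
    have t1 : 0 < (n : ℝ) * ((1 - cn * η) * (1 - c1 * η)) :=
      mul_pos hn0 (mul_pos hA hB)
    have h2 : (1 - cn * η) * (1 - c1 * η) ≤ (1 - c1 * η) ^ 2 := by nlinarith
    have h3 : 0 ≤ 2 * (cn - c1) * N * (n : ℝ) := by nlinarith
    nlinarith [mul_lt_mul_of_pos_right hkey t1, mul_le_mul_of_nonneg_left h2 h3]
  have hcn0 : 0 < cn := lt_trans hc1 hc1n
  have e3 : 0 < cn ^ 2 / (2 * (1 - cn * η) ^ 2) := by positivity
  have e4 : (n : ℝ) * (N / (η * (1 - c1 * η)) + c1 ^ 2 / (2 * (1 - c1 * η) ^ 2)) =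
      (n : ℝ) * N / (η * (1 - c1 * η)) + (n : ℝ) * c1 ^ 2 / (2 * (1 - c1 * η) ^ 2) := by
    ring
  rw [e1, e4]
  linarith
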